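/- Let A be an m×n real matrix, I a set of row indices and J a set of column indices. If the submatrix U = A(I,J) satisfies rank(U) = rank(A), then A = C U† R, where C = A(:,J) is the column submatrix, R = A(I,:) is the row submatrix, and U† denotes the Moore–Penrose pseudoinverse. -/

import Mathlib

open Matrix

/-- Frobenius norm of a real matrix. -/
noncomputable def frobNorm {m n : Type*} [Fintype m] [Fintype n]
    (A : Matrix m n ℝ) : ℝ := Real.sqrt (∑ i, ∑ j, (A i j) ^ 2)

/-- Spectral (operator) norm of a real matrix. -/
noncomputable def specNorm {m n : ℕ} (A : Matrix (Fin m) (Fin n) ℝ) : ℝ :=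
  ‖LinearMap.toContinuousLinearMap (Matrix.toEuclideanLin A)‖

/-- `B` is the Moore–Penrose pseudoinverse of `A`. -/
def IsMPInv {m n : ℕ} (A : Matrix (Fin m) (Fin n) ℝ)
    (B : Matrix (Fin n) (Fin m) ℝ) : Prop :=
  A * B * A = A ∧ B * A * B = B ∧ (A * B)ᵀ = A * B ∧ (B * A)ᵀ = B * A

/-- `B` is the `τ`-truncated Moore–Penrose pseudoinverse of `A`: singular values
of `A` below `τ` are set to zero before pseudoinverting. -/
def IsTruncatedPinv {m n : ℕ} (A : Matrix (Fin m) (Fin n) ℝ) (τ : ℝ)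
    (B : Matrix (Fin n) (Fin m) ℝ) : Prop :=
  ∃ (r : ℕ) (W : Matrix (Fin m) (Fin r) ℝ) (V : Matrix (Fin n) (Fin r) ℝ)
    (σ : Fin r → ℝ),
    Wᵀ * W = 1 ∧ Vᵀ * V = 1 ∧ (∀ i, 0 < σ i) ∧
    A = W * Matrix.diagonal σ * Vᵀ ∧
    B = V * Matrix.diagonal (fun i => if τ ≤ σ i then (σ i)⁻¹ else 0) * Wᵀ

/-- `B` is `A` with its singular values below `τ` set to zero. -/
def IsTruncation {m n : ℕ} (A : Matrix (Fin m) (Fin n) ℝ) (τ : ℝ)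
    (B : Matrix (Fin m) (Fin n) ℝ) : Prop :=
  ∃ (r : ℕ) (W : Matrix (Fin m) (Fin r) ℝ) (V : Matrix (Fin n) (Fin r) ℝ)
    (σ : Fin r → ℝ),
    Wᵀ * W = 1 ∧ Vᵀ * V = 1 ∧ (∀ i, 0 < σ i) ∧
    A = W * Matrix.diagonal σ * Vᵀ ∧
    B = W * Matrix.diagonal (fun i => if τ ≤ σ i then σ i else 0) * Vᵀ

/-- Range of a column submatrix is contained in the range of the matrix. -/
lemma colsub_range_le {m n q : ℕ} (A : Matrix (Fin m) (Fin n) ℝ)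
    (f : Fin q → Fin n) :
    LinearMap.range (A.submatrix id f).mulVecLin ≤ LinearMap.range A.mulVecLin := by
  rintro _ ⟨x, rfl⟩
  refine ⟨fun j => ∑ i, if j = f i then x i else 0, ?_⟩
  ext i0
  simp only [mulVecLin_apply, mulVec, dotProduct, submatrix_apply, id_eq,
    Finset.mul_sum]
  rw [Finset.sum_comm]
  refine Finset.sum_congr rfl fun i _ => ?_
  simp [mul_ite]

lemma rank_colsub_le {m n q : ℕ} (A : Matrix (Fin m) (Fin n) ℝ)
    (f : Fin q → Fin n) : (A.submatrix id f).rank ≤ A.rank :=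
  Submodule.finrank_mono (colsub_range_le A f)

lemma rank_rowsub_le {m n p : ℕ} (A : Matrix (Fin m) (Fin n) ℝ)
    (g : Fin p → Fin m) : (A.submatrix g id).rank ≤ A.rank := by
  rw [← Matrix.rank_transpose, ← Matrix.rank_transpose A]
  exact rank_colsub_le Aᵀ g

/-- If a column submatrix has full rank, the matrix factors through it. -/
lemma colsub_factor {m n q : ℕ} (A : Matrix (Fin m) (Fin n) ℝ)
    (f : Fin q → Fin n) (h : (A.submatrix id f).rank = A.rank) :
    ∃ Z : Matrix (Fin q) (Fin n) ℝ, A = A.submatrix id f * Z := by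
  have hle := colsub_range_le A f
  have heq : LinearMap.range (A.submatrix id f).mulVecLin
      = LinearMap.range A.mulVecLin := by
    apply Submodule.eq_of_le_of_finrank_le hle
    exact le_of_eq h.symm
  have hcol : ∀ j : Fin n, ∃ x : Fin q → ℝ,
      (A.submatrix id f).mulVecLin x = A.mulVecLin (Pi.single j 1) := by
    intro j
    have : A.mulVecLin (Pi.single j 1) ∈ LinearMap.range (A.submatrix id f).mulVecLin := by
      rw [heq]; exact ⟨_, rfl⟩
    exact this
  choose x hx using hcol
  refine ⟨Matrix.of fun i j => x j i, ?_⟩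
  ext i j
  have := congrFun (hx j) i
  simp only [mulVecLin_apply, mulVec, dotProduct] at this
  simp only [Matrix.mul_apply, Matrix.of_apply]
  rw [this]
  simp [Pi.single_apply, mul_ite]

/-- If a row submatrix has full rank, the matrix factors through it. -/
lemma rowsub_factor {m n p : ℕ} (A : Matrix (Fin m) (Fin n) ℝ)
    (g : Fin p → Fin m) (h : (A.submatrix g id).rank = A.rank) :
    ∃ Y : Matrix (Fin m) (Fin p) ℝ, A = Y * A.submatrix g id := by
  have h' : (Aᵀ.submatrix id g).rank = Aᵀ.rank := by
    rw [Matrix.rank_transpose]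
    have : Aᵀ.submatrix id g = (A.submatrix g id)ᵀ := rfl
    rw [this, Matrix.rank_transpose]
    exact h
  obtain ⟨Z, hZ⟩ := colsub_factor Aᵀ g h'
  refine ⟨Zᵀ, ?_⟩
  have := congrArg Matrix.transpose hZ
  simpa [Matrix.transpose_mul] using this

/-- if `rank U = rank A` for `U = A(I,J)`, then `A = C U† R`. -/
theorem cross_approx_exact {m n p q : ℕ} (A : Matrix (Fin m) (Fin n) ℝ)
    (g : Fin p → Fin m) (f : Fin q → Fin n)
    (hg : Function.Injective g) (hf : Function.Injective f)
    (Udag : Matrix (Fin q) (Fin p) ℝ)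
    (hUdag : IsMPInv (A.submatrix g f) Udag)
    (hrank : (A.submatrix g f).rank = A.rank) :
    A = A.submatrix id f * Udag * A.submatrix g id := by
  set R := A.submatrix g id with hR
  set U := A.submatrix g f with hU
  -- rank chains
  have hUR : U = R.submatrix id f := rfl
  have hrankR : R.rank = A.rank := by
    refine le_antisymm (rank_rowsub_le A g) ?_
    rw [← hrank, hUR]
    exact rank_colsub_le R f
  have hrankU : (R.submatrix id f).rank = R.rank := by
    rw [← hUR, hrank, hrankR]
  -- factorizations
  obtain ⟨Y, hY⟩ := rowsub_factor A g hrankR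
  obtain ⟨Z, hZ⟩ := colsub_factor R f hrankU
  rw [← hUR] at hZ
  -- C = Y * U
  have hC : A.submatrix id f = Y * U := by
    have : A.submatrix id f = (Y * R).submatrix id f := by rw [← hY]
    rw [this]
    ext i j
    simp [Matrix.mul_apply, Matrix.submatrix_apply, hUR]
  calc A = Y * R := hY
    _ = Y * (U * Z) := by rw [← hZ]
    _ = Y * (U * Udag * U * Z) := by rw [hUdag.1]
    _ = (Y * U) * Udag * (U * Z) := by simp only [Matrix.mul_assoc]
    _ = A.submatrix id f * Udag * R := by rw [← hC, ← hZ]
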